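/- The characteristic polynomial of J₀ factors as det(τI − J₀) = (τ+ω)(τ+ω+α+μ)(τ+(ω+ω₁+m+r₁)(1−R₀₁))(τ+(ω+ω₂+r₂)(1−R₀₂))(τ+ω+δ); in particular the eigenvalues of J₀ are −ω, −(ω+α+μ), −(ω+ω₁+m+r₁)(1−R₀₁), −(ω+ω₂+r₂)(1−R₀₂) and −(ω+δ). -/

import Mathlib

open Matrix

set_option maxHeartbeats 1600000

private lemma aux_sub (a b c d e f g h i j k l m n o p τ : ℝ) :
    (τ • (1 : Matrix (Fin 5) (Fin 5) ℝ) -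
      !![a, b, c, d, e;
         f, g, h, i, j;
         0, 0, k, 0, 0;
         0, 0, l, m, 0;
         0, 0, n, o, p]) =
      !![τ - a, -b, -c, -d, -e;
         -f, τ - g, -h, -i, -j;
         0, 0, τ - k, 0, 0;
         0, 0, -l, τ - m, 0;
         0, 0, -n, -o, τ - p] := by
  ext i j
  fin_cases i <;> fin_cases j <;>
    simp [Matrix.smul_apply, Matrix.one_apply, Matrix.vecHead, Matrix.vecTail]

private lemma aux_det (a b c d e f g h i j k l m n o p τ : ℝ) :
    det !![τ - a, -b, -c, -d, -e;
         -f, τ - g, -h, -i, -j;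
         0, 0, τ - k, 0, 0;
         0, 0, -l, τ - m, 0;
         0, 0, -n, -o, τ - p] =
      ((τ - a) * (τ - g) - b * f) * (τ - k) * (τ - m) * (τ - p) := by
  simp [Matrix.det_succ_row_zero, Fin.sum_univ_succ]
  simp [Fin.succAbove, Fin.lt_def]
  ring

/-- The characteristic polynomial of the Jacobian J₀ at the disease-free
equilibrium factors as
det(τI − J₀) = (τ+ω)(τ+ω+α+μ)(τ+(ω+ω₁+m+r₁)(1−R₀₁))(τ+(ω+ω₂+r₂)(1−R₀₂))(τ+ω+δ);
in particular the eigenvalues of J₀ are −ω, −(ω+α+μ), −(ω+ω₁+m+r₁)(1−R₀₁),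
−(ω+ω₂+r₂)(1−R₀₂) and −(ω+δ). -/
theorem dfe_jacobian_charpoly
    (B ω β₁ β₂ α μ δ σ ω₁ ω₂ m r₁ r₂ : ℝ)
    (hB : 0 < B) (hω : 0 < ω) (hβ₁ : 0 < β₁) (hβ₂ : 0 < β₂) (hα : 0 < α)
    (hμ : 0 < μ) (hδ : 0 < δ) (hσ : σ ∈ Set.Ioo (0 : ℝ) 1)
    (hω₁ : 0 < ω₁) (hω₂ : 0 < ω₂) (hm : 0 < m) (hr₁ : 0 < r₁) (hr₂ : 0 < r₂)
    (S₀ V₀ R₀₁ R₀₂ : ℝ)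
    (hS₀ : S₀ = B * (μ + ω) / (ω * (μ + ω + α)))
    (hV₀ : V₀ = α * B / (ω * (μ + ω + α)))
    (hR₀₁ : R₀₁ = β₁ * (B * (μ + ω) + (1 - σ) * α * B) /
      ((ω + ω₁ + m + r₁) * ω * (μ + ω + α)))
    (hR₀₂ : R₀₂ = β₂ * (B * (μ + ω) + (1 - σ) * α * B) /
      ((ω + ω₂ + r₂) * ω * (μ + ω + α)))
    (J₀ : Matrix (Fin 5) (Fin 5) ℝ)
    (hJ₀ : J₀ =
      !![-ω - α, μ, -β₁ * S₀, -β₂ * S₀, δ;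
         α, -ω - μ, -(1 - σ) * β₁ * V₀, -(1 - σ) * β₂ * V₀, 0;
         0, 0, -(ω + ω₁ + m + r₁) + β₁ * (S₀ + (1 - σ) * V₀), 0, 0;
         0, 0, m, -(ω + ω₂ + r₂) + β₂ * (S₀ + (1 - σ) * V₀), 0;
         0, 0, r₁, r₂, -ω - δ]) :
    (∀ τ : ℝ,
      (τ • (1 : Matrix (Fin 5) (Fin 5) ℝ) - J₀).det =
        (τ + ω) * (τ + ω + α + μ) * (τ + (ω + ω₁ + m + r₁) * (1 - R₀₁)) *
          (τ + (ω + ω₂ + r₂) * (1 - R₀₂)) * (τ + ω + δ)) ∧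
    spectrum ℝ J₀ =
      {-ω, -(ω + α + μ), -((ω + ω₁ + m + r₁) * (1 - R₀₁)),
        -((ω + ω₂ + r₂) * (1 - R₀₂)), -(ω + δ)} := by
  have hden : ω * (μ + ω + α) ≠ 0 := by positivity
  have h1 : β₁ * (S₀ + (1 - σ) * V₀) = (ω + ω₁ + m + r₁) * R₀₁ := by
    have h : (ω + ω₁ + m + r₁) ≠ 0 := by positivity
    rw [hS₀, hV₀, hR₀₁]; field_simp
  have h2 : β₂ * (S₀ + (1 - σ) * V₀) = (ω + ω₂ + r₂) * R₀₂ := by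
    have h : (ω + ω₂ + r₂) ≠ 0 := by positivity
    rw [hS₀, hV₀, hR₀₂]; field_simp
  have key : ∀ τ : ℝ,
      (τ • (1 : Matrix (Fin 5) (Fin 5) ℝ) - J₀).det =
        (τ + ω) * (τ + ω + α + μ) * (τ + (ω + ω₁ + m + r₁) * (1 - R₀₁)) *
          (τ + (ω + ω₂ + r₂) * (1 - R₀₂)) * (τ + ω + δ) := by
    intro τ
    rw [hJ₀, aux_sub, aux_det]
    have e1 : τ - (-(ω + ω₁ + m + r₁) + β₁ * (S₀ + (1 - σ) * V₀)) =
        τ + (ω + ω₁ + m + r₁) * (1 - R₀₁) := by rw [h1]; ring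
    have e2 : τ - (-(ω + ω₂ + r₂) + β₂ * (S₀ + (1 - σ) * V₀)) =
        τ + (ω + ω₂ + r₂) * (1 - R₀₂) := by rw [h2]; ring
    rw [e1, e2]; ring
  refine ⟨key, ?_⟩
  ext τ
  have hmem : τ ∈ spectrum ℝ J₀ ↔
      (τ • (1 : Matrix (Fin 5) (Fin 5) ℝ) - J₀).det = 0 := by
    rw [spectrum.mem_iff, Algebra.algebraMap_eq_smul_one,
      Matrix.isUnit_iff_isUnit_det, isUnit_iff_ne_zero, not_not]
  rw [hmem, key τ]
  simp only [Set.mem_insert_iff, Set.mem_singleton_iff, mul_eq_zero]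
  constructor
  · rintro ((((h | h) | h) | h) | h)
    · exact Or.inl (by linarith)
    · exact Or.inr (Or.inl (by linarith))
    · exact Or.inr (Or.inr (Or.inl (by linarith)))
    · exact Or.inr (Or.inr (Or.inr (Or.inl (by linarith))))
    · exact Or.inr (Or.inr (Or.inr (Or.inr (by linarith))))
  · rintro (h | h | h | h | h)
    · exact Or.inl (Or.inl (Or.inl (Or.inl (by linarith))))
    · exact Or.inl (Or.inl (Or.inl (Or.inr (by linarith))))
    · exact Or.inl (Or.inl (Or.inr (by linarith)))
    · exact Or.inl (Or.inr (by linarith))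
    · exact Or.inr (by linarith)
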